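/- There exists a constant C, depending only on l, |σ(0)|, c and K (and not on m), such that for every width m ≥ 1, every input s ∈ ℝ^d with ‖s‖ ≤ 1, every b ∈ ℝ^m with |b_r| ≤ 1 for all r, and all weights θ = (θ^(1), …, θ^(K)) with ‖θ^(k)‖_F ≤ c√m for all k, the gradient of the network output V(s, θ) = (1/√m) b^T x^(K) with respect to all entries of θ^(1), …, θ^(K) satisfies ‖∇_θ V(s, θ)‖ ≤ C. -/

import Mathlib

noncomputable def stmt9Bsq (l s0 A : ℝ) : ℕ → ℝ
  | 0 => 1
  | k + 1 => 2 * s0 ^ 2 + 2 * l ^ 2 * A * stmt9Bsq l s0 A k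

noncomputable def stmt9Msq (l s0 A : ℝ) : ℕ → ℝ
  | 0 => 0
  | k + 1 => 2 * l ^ 2 * stmt9Bsq l s0 A k + 2 * l ^ 2 * A * stmt9Msq l s0 A k

lemma stmt9_cs {ι : Type*} [Fintype ι] (f g : ι → ℝ) (G : ℝ) (hg : ∑ j, g j ^ 2 ≤ G) :
    (∑ j, f j * g j) ^ 2 ≤ (∑ j, f j ^ 2) * G :=
  le_trans (Finset.sum_mul_sq_le_sq_mul_sq _ _ _) (mul_le_mul_of_nonneg_left hg (by positivity))

lemma stmt9Bsq_nonneg {l s0 A : ℝ} (hA : 0 ≤ A) : ∀ k, 0 ≤ stmt9Bsq l s0 A k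
  | 0 => by norm_num [stmt9Bsq]
  | k + 1 => by
      have := stmt9Bsq_nonneg (l := l) (s0 := s0) hA k
      simp only [stmt9Bsq]; positivity

lemma stmt9Msq_nonneg {l s0 A : ℝ} (hA : 0 ≤ A) : ∀ k, 0 ≤ stmt9Msq l s0 A k
  | 0 => le_refl _
  | k + 1 => by
      have h1 := stmt9Msq_nonneg (l := l) (s0 := s0) hA k
      have h2 := stmt9Bsq_nonneg (l := l) (s0 := s0) hA k
      simp only [stmt9Msq]; positivity

set_option maxHeartbeats 2000000 in
theorem stmt9 :
    ∃ C : ℝ → ℝ → ℝ → ℕ → ℝ,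
      ∀ (l c : ℝ) (K : ℕ), 1 ≤ K →
      ∀ σ : ℝ → ℝ, Differentiable ℝ σ → (∀ u v, |σ u - σ v| ≤ l * |u - v|) →
      ∀ (d m : ℕ), 1 ≤ m →
      ∀ s : EuclideanSpace ℝ (Fin d), ‖s‖ ≤ 1 →
      ∀ b : Fin m → ℝ, (∀ r, |b r| ≤ 1) →
      ∀ (x : EuclideanSpace ℝ ((Fin m × Fin d) ⊕ (Fin (K - 1) × Fin m × Fin m)) →
            ℕ → Fin m → ℝ)
        (V : EuclideanSpace ℝ ((Fin m × Fin d) ⊕ (Fin (K - 1) × Fin m × Fin m)) → ℝ),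
        (∀ θ i, x θ 1 i = (1 / Real.sqrt m) * σ (∑ j, θ (Sum.inl (i, j)) * s j)) →
        (∀ θ (k : Fin (K - 1)) i,
          x θ (k.1 + 2) i
            = (1 / Real.sqrt m) * σ (∑ j, θ (Sum.inr (k, i, j)) * x θ (k.1 + 1) j)) →
        (∀ θ, V θ = (1 / Real.sqrt m) * ∑ r, b r * x θ K r) →
      ∀ θ : EuclideanSpace ℝ ((Fin m × Fin d) ⊕ (Fin (K - 1) × Fin m × Fin m)),
        Real.sqrt (∑ i, ∑ j, θ (Sum.inl (i, j)) ^ 2) ≤ c * Real.sqrt m →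
        (∀ k : Fin (K - 1),
          Real.sqrt (∑ i, ∑ j, θ (Sum.inr (k, i, j)) ^ 2) ≤ c * Real.sqrt m) →
        ‖fderiv ℝ V θ‖ ≤ C l |σ 0| c K := by
  refine ⟨fun l s0 c K => Real.sqrt (stmt9Msq l s0 (2 * c ^ 2 + 2) K), ?_⟩
  intro l c K hK σ hσdiff hσlip d m hm s hs b hb x V hx1 hx2 hV θ hθ1 hθ2
  set s0 : ℝ := |σ 0| with hs0def
  set A : ℝ := 2 * c ^ 2 + 2 with hAdef
  have hA0 : 0 ≤ A := by positivity
  have hl0 : 0 ≤ l := by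
    have h := hσlip 0 1
    have : |(0:ℝ) - 1| = 1 := by norm_num
    rw [this, mul_one] at h
    exact le_trans (abs_nonneg _) h
  have hB0 := stmt9Bsq_nonneg (l := l) (s0 := s0) hA0
  have hM0 := stmt9Msq_nonneg (l := l) (s0 := s0) hA0
  have hm1 : (1 : ℝ) ≤ (m : ℝ) := by exact_mod_cast hm
  have hmpos : (0 : ℝ) < (m : ℝ) := lt_of_lt_of_le one_pos hm1
  have hrs : (1 / Real.sqrt m) ^ 2 = 1 / (m : ℝ) := by
    rw [div_pow, one_pow, Real.sq_sqrt hmpos.le]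
  -- σ bounds
  have hσbd : ∀ u : ℝ, σ u ^ 2 ≤ 2 * s0 ^ 2 + 2 * l ^ 2 * u ^ 2 := by
    intro u
    have h := hσlip u 0
    rw [sub_zero] at h
    have habs : |σ u| ≤ l * |u| + s0 := by
      calc |σ u| = |(σ u - σ 0) + σ 0| := by ring_nf
        _ ≤ |σ u - σ 0| + |σ 0| := abs_add_le _ _
        _ ≤ l * |u| + s0 := by rw [hs0def]; exact add_le_add h le_rfl
    nlinarith [sq_abs (σ u), sq_abs u, abs_nonneg (σ u), abs_nonneg u,
      sq_nonneg (l * |u| - s0), mul_nonneg hl0 (abs_nonneg u)]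
  have hσlip2 : ∀ u v : ℝ, (σ u - σ v) ^ 2 ≤ l ^ 2 * (u - v) ^ 2 := by
    intro u v
    have h := hσlip u v
    nlinarith [sq_abs (σ u - σ v), sq_abs (u - v), abs_nonneg (σ u - σ v), abs_nonneg (u - v),
      mul_nonneg hl0 (abs_nonneg (u - v))]
  -- input bound
  have hss : ∑ j, s j ^ 2 ≤ 1 := by
    have h0 : (0:ℝ) ≤ ∑ j, ‖s j‖ ^ 2 := by positivity
    have h1 : Real.sqrt (∑ j, ‖s j‖ ^ 2) ≤ 1 := by
      rw [← EuclideanSpace.norm_eq]; exact hs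
    have h2 : ∑ j, ‖s j‖ ^ 2 ≤ 1 := by
      nlinarith [Real.sq_sqrt h0, Real.sqrt_nonneg (∑ j, ‖s j‖ ^ 2)]
    calc ∑ j, s j ^ 2 = ∑ j, ‖s j‖ ^ 2 := by
          simp [Real.norm_eq_abs, sq_abs]
      _ ≤ 1 := h2
  -- squared weight bounds
  have hsqle : ∀ S : ℝ, 0 ≤ S → Real.sqrt S ≤ c * Real.sqrt m → S ≤ c ^ 2 * m := by
    intro S hS h
    have h1 := Real.sq_sqrt hS
    have h2 := Real.sq_sqrt hmpos.le
    have h3 := Real.sqrt_nonneg S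
    nlinarith [Real.sqrt_nonneg (m : ℝ)]
  -- admissibility
  let Adm : EuclideanSpace ℝ ((Fin m × Fin d) ⊕ (Fin (K - 1) × Fin m × Fin m)) → Prop := fun η =>
    (∑ i, ∑ j, η (Sum.inl (i, j)) ^ 2 ≤ A * m) ∧
      ∀ k : Fin (K - 1), ∑ i, ∑ j, η (Sum.inr (k, i, j)) ^ 2 ≤ A * m
  have hθ1' : ∑ i, ∑ j, θ (Sum.inl (i, j)) ^ 2 ≤ c ^ 2 * m :=
    hsqle _ (by positivity) hθ1
  have hθ2' : ∀ k, ∑ i, ∑ j, θ (Sum.inr (k, i, j)) ^ 2 ≤ c ^ 2 * m := fun k =>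
    hsqle _ (by positivity) (hθ2 k)
  have hθAdm : Adm θ := by
    constructor
    · exact le_trans hθ1' (by nlinarith)
    · intro k; exact le_trans (hθ2' k) (by nlinarith)
  -- splitting of norms
  have hsplit : ∀ v : EuclideanSpace ℝ ((Fin m × Fin d) ⊕ (Fin (K - 1) × Fin m × Fin m)),
      ‖v‖ ^ 2 =
      (∑ i, ∑ j, v (Sum.inl (i, j)) ^ 2) + ∑ k, ∑ i, ∑ j, v (Sum.inr (k, i, j)) ^ 2 := by
    intro v
    rw [EuclideanSpace.norm_eq, Real.sq_sqrt (by positivity)]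
    rw [Fintype.sum_sum_type]
    simp [Fintype.sum_prod_type, Real.norm_eq_abs, sq_abs]
  have hmne : (m : ℝ) ≠ 0 := hmpos.ne'
  have h4 : (0 : ℝ) ≤ 1 / (m : ℝ) := by positivity
  -- Main induction on layers: norm bound and Lipschitz bound
  have main : ∀ n, 1 ≤ n → n ≤ K →
      (∀ η, Adm η → ∑ i, x η n i ^ 2 ≤ stmt9Bsq l s0 A n) ∧
      (∀ η η', Adm η → Adm η' → ∀ D : ℝ, 0 ≤ D →
        (∑ i, ∑ j, (η (Sum.inl (i, j)) - η' (Sum.inl (i, j))) ^ 2 ≤ D) →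
        (∀ k : Fin (K - 1),
          ∑ i, ∑ j, (η (Sum.inr (k, i, j)) - η' (Sum.inr (k, i, j))) ^ 2 ≤ D) →
        ∑ i, (x η n i - x η' n i) ^ 2 ≤ stmt9Msq l s0 A n / m * D) := by
    intro n hn
    induction n, hn using Nat.le_induction with
    | base =>
      intro _
      constructor
      · intro η hη
        have key : ∀ i : Fin m, x η 1 i ^ 2 ≤
            (1 / m) * (2 * s0 ^ 2 + 2 * l ^ 2 * ∑ j, η (Sum.inl (i, j)) ^ 2) := by
          intro i
          rw [hx1, mul_pow, hrs]
          refine mul_le_mul_of_nonneg_left ?_ h4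
          have h1 : (∑ j, η (Sum.inl (i, j)) * s j) ^ 2 ≤
              (∑ j, η (Sum.inl (i, j)) ^ 2) * 1 := stmt9_cs _ _ _ hss
          have h2 := hσbd (∑ j, η (Sum.inl (i, j)) * s j)
          nlinarith [mul_le_mul_of_nonneg_left h1 (by positivity : (0:ℝ) ≤ 2 * l ^ 2)]
        calc ∑ i, x η 1 i ^ 2
            ≤ ∑ i : Fin m, (1 / m) *
                (2 * s0 ^ 2 + 2 * l ^ 2 * ∑ j, η (Sum.inl (i, j)) ^ 2) :=
              Finset.sum_le_sum fun i _ => key i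
          _ = (1 / m) * ((m : ℝ) * (2 * s0 ^ 2) +
                2 * l ^ 2 * ∑ i, ∑ j, η (Sum.inl (i, j)) ^ 2) := by
              rw [← Finset.mul_sum, Finset.sum_add_distrib, Finset.sum_const,
                Finset.card_univ, Fintype.card_fin, nsmul_eq_mul, ← Finset.mul_sum]
          _ ≤ (1 / m) * ((m : ℝ) * (2 * s0 ^ 2) + 2 * l ^ 2 * (A * m)) := by
              refine mul_le_mul_of_nonneg_left ?_ h4
              have := mul_le_mul_of_nonneg_left hη.1 (by positivity : (0:ℝ) ≤ 2 * l ^ 2)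
              linarith
          _ = stmt9Bsq l s0 A 1 := by
              simp only [stmt9Bsq]; field_simp
      · intro η η' hη hη' D hD hD1 hD2
        have key : ∀ i : Fin m, (x η 1 i - x η' 1 i) ^ 2 ≤
            (1 / m) * (l ^ 2 *
              ∑ j, (η (Sum.inl (i, j)) - η' (Sum.inl (i, j))) ^ 2) := by
          intro i
          rw [hx1, hx1, ← mul_sub, mul_pow, hrs]
          refine mul_le_mul_of_nonneg_left ?_ h4
          have hdiff : (∑ j, η (Sum.inl (i, j)) * s j) - (∑ j, η' (Sum.inl (i, j)) * s j)
              = ∑ j, (η (Sum.inl (i, j)) - η' (Sum.inl (i, j))) * s j := by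
            rw [← Finset.sum_sub_distrib]
            exact Finset.sum_congr rfl fun j _ => (sub_mul _ _ _).symm
          have h2 := hσlip2 (∑ j, η (Sum.inl (i, j)) * s j) (∑ j, η' (Sum.inl (i, j)) * s j)
          rw [hdiff] at h2
          have h1 : (∑ j, (η (Sum.inl (i, j)) - η' (Sum.inl (i, j))) * s j) ^ 2 ≤
              (∑ j, (η (Sum.inl (i, j)) - η' (Sum.inl (i, j))) ^ 2) * 1 := stmt9_cs _ _ _ hss
          nlinarith [mul_le_mul_of_nonneg_left h1 (by positivity : (0:ℝ) ≤ l ^ 2)]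
        calc ∑ i, (x η 1 i - x η' 1 i) ^ 2
            ≤ ∑ i : Fin m, (1 / m) * (l ^ 2 *
                ∑ j, (η (Sum.inl (i, j)) - η' (Sum.inl (i, j))) ^ 2) :=
              Finset.sum_le_sum fun i _ => key i
          _ = (1 / m) * (l ^ 2 *
                ∑ i, ∑ j, (η (Sum.inl (i, j)) - η' (Sum.inl (i, j))) ^ 2) := by
              rw [← Finset.mul_sum, ← Finset.mul_sum]
          _ ≤ (1 / m) * (l ^ 2 * D) := by
              refine mul_le_mul_of_nonneg_left ?_ h4
              exact mul_le_mul_of_nonneg_left hD1 (by positivity)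
          _ ≤ stmt9Msq l s0 A 1 / m * D := by
              have hM1 : stmt9Msq l s0 A 1 = 2 * l ^ 2 := by
                simp only [stmt9Msq, stmt9Bsq]; ring
              have h5 : l ^ 2 * D ≤ 2 * l ^ 2 * D := by
                nlinarith [mul_nonneg (sq_nonneg l) hD]
              have h6 : stmt9Msq l s0 A 1 / m * D = (1 / m) * (2 * l ^ 2 * D) := by
                rw [hM1]; ring
              rw [h6]
              exact mul_le_mul_of_nonneg_left h5 h4
    | succ n hn ih =>
      intro hnK
      obtain ⟨ihB, ihL⟩ := ih (by omega)
      have hkpos : n - 1 < K - 1 := by omega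
      have hxeq : ∀ η i, x η (n + 1) i =
          (1 / Real.sqrt m) * σ (∑ j, η (Sum.inr (⟨n - 1, hkpos⟩, i, j)) * x η n j) := by
        intro η i
        have h := hx2 η ⟨n - 1, hkpos⟩ i
        have e2 : n - 1 + 2 = n + 1 := by omega
        have e1 : n - 1 + 1 = n := by omega
        rw [show ((⟨n - 1, hkpos⟩ : Fin (K - 1)) : ℕ) = n - 1 from rfl, e2, e1] at h
        exact h
      constructor
      · intro η hη
        have hxb := ihB η hη
        have key : ∀ i : Fin m, x η (n + 1) i ^ 2 ≤
            (1 / m) * (2 * s0 ^ 2 + (2 * l ^ 2 * stmt9Bsq l s0 A n) *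
              ∑ j, η (Sum.inr (⟨n - 1, hkpos⟩, i, j)) ^ 2) := by
          intro i
          rw [hxeq, mul_pow, hrs]
          refine mul_le_mul_of_nonneg_left ?_ h4
          have h1 : (∑ j, η (Sum.inr (⟨n - 1, hkpos⟩, i, j)) * x η n j) ^ 2 ≤
              (∑ j, η (Sum.inr (⟨n - 1, hkpos⟩, i, j)) ^ 2) * stmt9Bsq l s0 A n :=
            stmt9_cs _ _ _ hxb
          have h2 := hσbd (∑ j, η (Sum.inr (⟨n - 1, hkpos⟩, i, j)) * x η n j)
          nlinarith [mul_le_mul_of_nonneg_left h1 (by positivity : (0:ℝ) ≤ 2 * l ^ 2)]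
        calc ∑ i, x η (n + 1) i ^ 2
            ≤ ∑ i : Fin m, (1 / m) * (2 * s0 ^ 2 + (2 * l ^ 2 * stmt9Bsq l s0 A n) *
                ∑ j, η (Sum.inr (⟨n - 1, hkpos⟩, i, j)) ^ 2) :=
              Finset.sum_le_sum fun i _ => key i
          _ = (1 / m) * ((m : ℝ) * (2 * s0 ^ 2) + (2 * l ^ 2 * stmt9Bsq l s0 A n) *
                ∑ i, ∑ j, η (Sum.inr (⟨n - 1, hkpos⟩, i, j)) ^ 2) := by
              rw [← Finset.mul_sum, Finset.sum_add_distrib, Finset.sum_const,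
                Finset.card_univ, Fintype.card_fin, nsmul_eq_mul, ← Finset.mul_sum]
          _ ≤ (1 / m) * ((m : ℝ) * (2 * s0 ^ 2) +
                (2 * l ^ 2 * stmt9Bsq l s0 A n) * (A * m)) := by
              refine mul_le_mul_of_nonneg_left ?_ h4
              have hc : (0:ℝ) ≤ 2 * l ^ 2 * stmt9Bsq l s0 A n := by
                have := hB0 n; positivity
              have := mul_le_mul_of_nonneg_left (hη.2 ⟨n - 1, hkpos⟩) hc
              linarith
          _ = stmt9Bsq l s0 A (n + 1) := by
              simp only [stmt9Bsq]; field_simp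
      · intro η η' hη hη' D hD hD1 hD2
        have hxb := ihB η hη
        have hΔx := ihL η η' hη hη' D hD hD1 hD2
        have hMD : (0:ℝ) ≤ stmt9Msq l s0 A n / m * D := by
          have := hM0 n; positivity
        have key : ∀ i : Fin m, (x η (n + 1) i - x η' (n + 1) i) ^ 2 ≤
            (1 / m) * ((2 * l ^ 2 * stmt9Bsq l s0 A n) *
                (∑ j, (η (Sum.inr (⟨n - 1, hkpos⟩, i, j))
                      - η' (Sum.inr (⟨n - 1, hkpos⟩, i, j))) ^ 2)
              + (2 * l ^ 2 * (stmt9Msq l s0 A n / m * D)) *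
                ∑ j, η' (Sum.inr (⟨n - 1, hkpos⟩, i, j)) ^ 2) := by
          intro i
          rw [hxeq, hxeq, ← mul_sub, mul_pow, hrs]
          refine mul_le_mul_of_nonneg_left ?_ h4
          have hdiff : (∑ j, η (Sum.inr (⟨n - 1, hkpos⟩, i, j)) * x η n j)
              - (∑ j, η' (Sum.inr (⟨n - 1, hkpos⟩, i, j)) * x η' n j)
              = (∑ j, (η (Sum.inr (⟨n - 1, hkpos⟩, i, j))
                      - η' (Sum.inr (⟨n - 1, hkpos⟩, i, j))) * x η n j)
                + ∑ j, η' (Sum.inr (⟨n - 1, hkpos⟩, i, j)) * (x η n j - x η' n j) := by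
            rw [← Finset.sum_add_distrib, ← Finset.sum_sub_distrib]
            exact Finset.sum_congr rfl fun j _ => by ring
          have h2 := hσlip2 (∑ j, η (Sum.inr (⟨n - 1, hkpos⟩, i, j)) * x η n j)
            (∑ j, η' (Sum.inr (⟨n - 1, hkpos⟩, i, j)) * x η' n j)
          rw [hdiff] at h2
          have hP : (∑ j, (η (Sum.inr (⟨n - 1, hkpos⟩, i, j))
                  - η' (Sum.inr (⟨n - 1, hkpos⟩, i, j))) * x η n j) ^ 2 ≤
              (∑ j, (η (Sum.inr (⟨n - 1, hkpos⟩, i, j))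
                  - η' (Sum.inr (⟨n - 1, hkpos⟩, i, j))) ^ 2) * stmt9Bsq l s0 A n :=
            stmt9_cs _ _ _ hxb
          have hQ : (∑ j, η' (Sum.inr (⟨n - 1, hkpos⟩, i, j)) * (x η n j - x η' n j)) ^ 2 ≤
              (∑ j, η' (Sum.inr (⟨n - 1, hkpos⟩, i, j)) ^ 2) *
                (stmt9Msq l s0 A n / m * D) := stmt9_cs _ _ _ hΔx
          nlinarith [mul_le_mul_of_nonneg_left hP (by positivity : (0:ℝ) ≤ 2 * l ^ 2),
            mul_le_mul_of_nonneg_left hQ (by positivity : (0:ℝ) ≤ 2 * l ^ 2),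
            mul_nonneg (sq_nonneg l)
              (sq_nonneg ((∑ j, (η (Sum.inr (⟨n - 1, hkpos⟩, i, j))
                  - η' (Sum.inr (⟨n - 1, hkpos⟩, i, j))) * x η n j)
                - ∑ j, η' (Sum.inr (⟨n - 1, hkpos⟩, i, j)) * (x η n j - x η' n j)))]
        calc ∑ i, (x η (n + 1) i - x η' (n + 1) i) ^ 2
            ≤ ∑ i : Fin m, (1 / m) * ((2 * l ^ 2 * stmt9Bsq l s0 A n) *
                (∑ j, (η (Sum.inr (⟨n - 1, hkpos⟩, i, j))
                      - η' (Sum.inr (⟨n - 1, hkpos⟩, i, j))) ^ 2)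
              + (2 * l ^ 2 * (stmt9Msq l s0 A n / m * D)) *
                ∑ j, η' (Sum.inr (⟨n - 1, hkpos⟩, i, j)) ^ 2) :=
              Finset.sum_le_sum fun i _ => key i
          _ = (1 / m) * ((2 * l ^ 2 * stmt9Bsq l s0 A n) *
                (∑ i, ∑ j, (η (Sum.inr (⟨n - 1, hkpos⟩, i, j))
                      - η' (Sum.inr (⟨n - 1, hkpos⟩, i, j))) ^ 2)
              + (2 * l ^ 2 * (stmt9Msq l s0 A n / m * D)) *
                ∑ i, ∑ j, η' (Sum.inr (⟨n - 1, hkpos⟩, i, j)) ^ 2) := by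
              rw [← Finset.mul_sum, Finset.sum_add_distrib, ← Finset.mul_sum, ← Finset.mul_sum]
          _ ≤ (1 / m) * ((2 * l ^ 2 * stmt9Bsq l s0 A n) * D
              + (2 * l ^ 2 * (stmt9Msq l s0 A n / m * D)) * (A * m)) := by
              refine mul_le_mul_of_nonneg_left ?_ h4
              have hc1 : (0:ℝ) ≤ 2 * l ^ 2 * stmt9Bsq l s0 A n := by
                have := hB0 n; positivity
              have hc2 : (0:ℝ) ≤ 2 * l ^ 2 * (stmt9Msq l s0 A n / m * D) := by positivity
              have e1 := mul_le_mul_of_nonneg_left (hD2 ⟨n - 1, hkpos⟩) hc1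
              have e2 := mul_le_mul_of_nonneg_left (hη'.2 ⟨n - 1, hkpos⟩) hc2
              linarith
          _ = stmt9Msq l s0 A (n + 1) / m * D := by
              simp only [stmt9Msq]; field_simp
  -- Conclusion via the converse mean value inequality
  obtain ⟨-, mainL⟩ := main K hK le_rfl
  refine norm_fderiv_le_of_lip' ℝ (Real.sqrt_nonneg _) ?_
  filter_upwards [Metric.closedBall_mem_nhds θ one_pos] with η hη
  have hdist : ‖η - θ‖ ≤ 1 := by
    rw [← dist_eq_norm]; exact Metric.mem_closedBall.mp hη
  set D : ℝ := ‖η - θ‖ ^ 2 with hDdef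
  have hD0 : 0 ≤ D := sq_nonneg _
  have hDle1 : D ≤ 1 := by nlinarith [norm_nonneg (η - θ)]
  have hsplitD := hsplit (η - θ)
  have hsub : ∀ p, (η - θ) p = η p - θ p := fun p => rfl
  simp only [hsub] at hsplitD
  have hblock1 : ∑ i, ∑ j, (η (Sum.inl (i, j)) - θ (Sum.inl (i, j))) ^ 2 ≤ D := by
    have h2 : (0:ℝ) ≤ ∑ k : Fin (K - 1), ∑ i, ∑ j,
        (η (Sum.inr (k, i, j)) - θ (Sum.inr (k, i, j))) ^ 2 := by positivity
    rw [hDdef]; linarith [hsplitD]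
  have hblock2 : ∀ k : Fin (K - 1),
      ∑ i, ∑ j, (η (Sum.inr (k, i, j)) - θ (Sum.inr (k, i, j))) ^ 2 ≤ D := by
    intro k
    have h1 : (0:ℝ) ≤ ∑ i, ∑ j, (η (Sum.inl (i, j)) - θ (Sum.inl (i, j))) ^ 2 := by positivity
    have h3 : ∑ i, ∑ j, (η (Sum.inr (k, i, j)) - θ (Sum.inr (k, i, j))) ^ 2
        ≤ ∑ k' : Fin (K - 1), ∑ i, ∑ j,
            (η (Sum.inr (k', i, j)) - θ (Sum.inr (k', i, j))) ^ 2 :=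
      Finset.single_le_sum (f := fun k' => ∑ i, ∑ j,
        (η (Sum.inr (k', i, j)) - θ (Sum.inr (k', i, j))) ^ 2)
        (fun k' _ => by positivity) (Finset.mem_univ k)
    rw [hDdef]; linarith [hsplitD]
  have hηAdm : Adm η := by
    constructor
    · have hpt : ∀ p : Fin m × Fin d, η (Sum.inl p) ^ 2 ≤
          2 * θ (Sum.inl p) ^ 2 + 2 * (η (Sum.inl p) - θ (Sum.inl p)) ^ 2 := by
        intro p
        nlinarith [sq_nonneg (θ (Sum.inl p) - (η (Sum.inl p) - θ (Sum.inl p)))]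
      have hb1 : ∑ i, ∑ j, (η (Sum.inl (i, j)) - θ (Sum.inl (i, j))) ^ 2 ≤ 1 :=
        le_trans hblock1 hDle1
      calc ∑ i, ∑ j, η (Sum.inl (i, j)) ^ 2
          ≤ ∑ i : Fin m, ∑ j : Fin d, (2 * θ (Sum.inl (i, j)) ^ 2
              + 2 * (η (Sum.inl (i, j)) - θ (Sum.inl (i, j))) ^ 2) :=
            Finset.sum_le_sum fun i _ => Finset.sum_le_sum fun j _ => hpt (i, j)
        _ = 2 * (∑ i, ∑ j, θ (Sum.inl (i, j)) ^ 2)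
            + 2 * ∑ i, ∑ j, (η (Sum.inl (i, j)) - θ (Sum.inl (i, j))) ^ 2 := by
            simp [Finset.sum_add_distrib, Finset.mul_sum]
        _ ≤ 2 * (c ^ 2 * m) + 2 * 1 := by
            have := hθ1'
            gcongr
        _ ≤ A * m := by rw [hAdef]; nlinarith
    · intro k
      have hpt : ∀ p : Fin m × Fin m, η (Sum.inr (k, p)) ^ 2 ≤
          2 * θ (Sum.inr (k, p)) ^ 2 + 2 * (η (Sum.inr (k, p)) - θ (Sum.inr (k, p))) ^ 2 := by
        intro p
        nlinarith [sq_nonneg (θ (Sum.inr (k, p)) - (η (Sum.inr (k, p)) - θ (Sum.inr (k, p))))]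
      have hb2 : ∑ i, ∑ j, (η (Sum.inr (k, i, j)) - θ (Sum.inr (k, i, j))) ^ 2 ≤ 1 :=
        le_trans (hblock2 k) hDle1
      calc ∑ i, ∑ j, η (Sum.inr (k, i, j)) ^ 2
          ≤ ∑ i : Fin m, ∑ j : Fin m, (2 * θ (Sum.inr (k, i, j)) ^ 2
              + 2 * (η (Sum.inr (k, i, j)) - θ (Sum.inr (k, i, j))) ^ 2) :=
            Finset.sum_le_sum fun i _ => Finset.sum_le_sum fun j _ => hpt (i, j)
        _ = 2 * (∑ i, ∑ j, θ (Sum.inr (k, i, j)) ^ 2)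
            + 2 * ∑ i, ∑ j, (η (Sum.inr (k, i, j)) - θ (Sum.inr (k, i, j))) ^ 2 := by
            simp [Finset.sum_add_distrib, Finset.mul_sum]
        _ ≤ 2 * (c ^ 2 * m) + 2 * 1 := by
            have := hθ2' k
            gcongr
        _ ≤ A * m := by rw [hAdef]; nlinarith
  have hL := mainL η θ hηAdm hθAdm D hD0 hblock1 hblock2
  have hVd : V η - V θ = (1 / Real.sqrt m) * ∑ r, b r * (x η K r - x θ K r) := by
    rw [hV, hV, ← mul_sub, ← Finset.sum_sub_distrib]
    congr 1
    exact Finset.sum_congr rfl fun r _ => (mul_sub _ _ _).symm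
  have hb2 : ∑ r, b r ^ 2 ≤ (m : ℝ) := by
    calc ∑ r, b r ^ 2 ≤ ∑ r : Fin m, (1:ℝ) :=
          Finset.sum_le_sum fun r _ => by
            have := hb r; nlinarith [sq_abs (b r), abs_nonneg (b r)]
      _ = m := by simp
  have hMD : (0:ℝ) ≤ stmt9Msq l s0 A K / m * D := by have := hM0 K; positivity
  have hCS : (∑ r, b r * (x η K r - x θ K r)) ^ 2 ≤
      (∑ r, b r ^ 2) * (stmt9Msq l s0 A K / m * D) := stmt9_cs _ _ _ hL
  have hsq : (V η - V θ) ^ 2 ≤ stmt9Msq l s0 A K * D := by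
    have h1 : (V η - V θ) ^ 2 = (1 / m) * (∑ r, b r * (x η K r - x θ K r)) ^ 2 := by
      rw [hVd, mul_pow, hrs]
    have h2 : (∑ r, b r ^ 2) * (stmt9Msq l s0 A K / m * D) ≤
        (m : ℝ) * (stmt9Msq l s0 A K / m * D) := mul_le_mul_of_nonneg_right hb2 hMD
    have h3 : (1 / (m:ℝ)) * ((m:ℝ) * (stmt9Msq l s0 A K / m * D)) =
        stmt9Msq l s0 A K * D / m := by field_simp
    have h4' : stmt9Msq l s0 A K * D / m ≤ stmt9Msq l s0 A K * D := by
      rw [div_le_iff₀ hmpos]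
      nlinarith [mul_nonneg (hM0 K) hD0]
    have h5 := mul_le_mul_of_nonneg_left (le_trans hCS h2) h4
    rw [h3] at h5
    linarith [h1 ▸ h5]
  calc ‖V η - V θ‖ = Real.sqrt ((V η - V θ) ^ 2) := by
        rw [Real.sqrt_sq_eq_abs, Real.norm_eq_abs]
    _ ≤ Real.sqrt (stmt9Msq l s0 A K * D) := Real.sqrt_le_sqrt hsq
    _ = Real.sqrt (stmt9Msq l s0 A K) * ‖η - θ‖ := by
        rw [hDdef, Real.sqrt_mul (hM0 K), Real.sqrt_sq (norm_nonneg _)]
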